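/- The Planar Laplace Mechanism satisfies ε-geo-indistinguishability: for any x, x', z ∈ ℝ², the ratio of densities D_ε(x)(z)/D_ε(x')(z) is at most e^{ε·d(x,x')}. -/
import Mathlib

open Real

/-- The Planar Laplace Mechanism satisfies ε-geo-indistinguishability:
the ratio of densities `D_ε(x)(z)/D_ε(x')(z)` is at most `exp(ε·d(x,x'))`. -/
theorem planar_laplace_geo_indistinguishability
    (ε : ℝ) (hε : 0 < ε) (x x' z : EuclideanSpace ℝ (Fin 2)) :
    ((ε ^ 2 / (2 * Real.pi)) * Real.exp (-ε * dist x z)) /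
      ((ε ^ 2 / (2 * Real.pi)) * Real.exp (-ε * dist x' z))
      ≤ Real.exp (ε * dist x x') := by
  have hc : 0 < ε ^ 2 / (2 * Real.pi) := by positivity
  rw [mul_div_mul_left _ _ (ne_of_gt hc), ← Real.exp_sub]
  apply Real.exp_le_exp.mpr
  have := dist_triangle x' x z
  nlinarith [dist_comm x x']
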